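/- arXiv:1309.0977 — 3 statements merged into one kernel-verified Lean document; each statement's English description precedes it below -/
import Mathlib

section
/- Let g be a symmetric bilinear form on V compatible with J as a Norden metric, i.e. g(Jx, Jy) = -g(x,y). Define the bilinear form ĝ on V ⊕ V by ĝ((x₁,y₁),(x₂,y₂)) = g(x₁,y₂) + g(y₁,x₂). Then ĝ is symmetric and satisfies ĝ(J₁·, J₁·) = ĝ, ĝ(J₂·, J₂·) = -ĝ, and ĝ(J₃·, J₃·) = -ĝ, where J₁(x,y) = (-Jx, Jy), J₂(x,y) = (-y, x), J₃(x,y) = (Jy, Jx). -/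
theorem stmt_2 {V : Type*} [AddCommGroup V] [Module ℝ V]
    (J : V →ₗ[ℝ] V) (hJ : ∀ x, J (J x) = -x)
    (g : V →ₗ[ℝ] V →ₗ[ℝ] ℝ)
    (hgsym : ∀ x y, g x y = g y x)
    (hNorden : ∀ x y, g (J x) (J y) = -g x y)
    (gh : V × V → V × V → ℝ)
    (hgh : ∀ p q, gh p q = g p.1 q.2 + g p.2 q.1)
    (J₁ J₂ J₃ : V × V → V × V)
    (hJ₁ : ∀ p, J₁ p = (-(J p.1), J p.2))
    (hJ₂ : ∀ p, J₂ p = (-p.2, p.1))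
    (hJ₃ : ∀ p, J₃ p = (J p.2, J p.1)) :
    (∀ p q, gh p q = gh q p) ∧
    (∀ p q, gh (J₁ p) (J₁ q) = gh p q) ∧
    (∀ p q, gh (J₂ p) (J₂ q) = -gh p q) ∧
    (∀ p q, gh (J₃ p) (J₃ q) = -gh p q) := by
  refine ⟨fun p q => ?_, fun p q => ?_, fun p q => ?_, fun p q => ?_⟩
  · rw [hgh, hgh, hgsym p.1 q.2, hgsym p.2 q.1]; ring
  · rw [hgh, hgh, hJ₁, hJ₁]; simp [hNorden]
  · rw [hgh, hgh, hJ₂, hJ₂]; simp [hgsym p.2 q.1]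
  · rw [hgh, hgh, hJ₃, hJ₃]; simp [hNorden, hgsym p.2 q.1]
end

section
/- For the h-sphere curvature tensor R = ν(π₁ - π₂) + ν*π₃ with ν = a/(a²+b²), ν* = -b/(a²+b²), every holomorphic 2-plane has zero sectional curvature: if y = Jx and g(x,x)g(y,y) - g(x,y)² ≠ 0, then R(x, y, y, x) = 0. -/
theorem stmt_10 {V : Type*} [AddCommGroup V] [Module ℝ V]
    (J : V →ₗ[ℝ] V) (hJ : ∀ x, J (J x) = -x)
    (g : V →ₗ[ℝ] V →ₗ[ℝ] ℝ)
    (hgsym : ∀ x y, g x y = g y x)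
    (hnd : ∀ x : V, (∀ y, g x y = 0) → x = 0)
    (hNorden : ∀ x y, g (J x) (J y) = -g x y)
    (gt : V → V → ℝ) (hgt : ∀ x y, gt x y = g x (J y))
    (π₁ π₂ π₃ : V → V → V → V → ℝ)
    (hπ₁ : ∀ x y z w, π₁ x y z w = g y z * g x w - g x z * g y w)
    (hπ₂ : ∀ x y z w, π₂ x y z w = gt y z * gt x w - gt x z * gt y w)
    (hπ₃ : ∀ x y z w, π₃ x y z w =
      -g y z * gt x w + g x z * gt y w - gt y z * g x w + gt x z * g y w)
    (a b : ℝ) (hab : (a, b) ≠ ((0 : ℝ), (0 : ℝ)))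
    (ν νs : ℝ) (hν : ν = a / (a ^ 2 + b ^ 2)) (hνs : νs = -b / (a ^ 2 + b ^ 2))
    (R : V → V → V → V → ℝ)
    (hR : ∀ x y z w, R x y z w = ν * (π₁ x y z w - π₂ x y z w) + νs * π₃ x y z w) :
    ∀ x y : V, y = J x → g x x * g y y - (g x y) ^ 2 ≠ 0 → R x y y x = 0 := by
  intro x y hy _
  subst hy
  rw [hR, hπ₁, hπ₂, hπ₃]
  simp only [hgt, hJ, hNorden, map_neg, LinearMap.neg_apply]
  have h1 : g x (J x) = g (J x) x := hgsym x (J x)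
  ring_nf
end

section
/- Given two anticommuting almost complex structures A, B on a Lie algebra L with A² = B² = -id and C = AB, if the Nijenhuis tensors N_A and N_B both vanish identically, then N_C also vanishes (so a triple is hypercomplex as soon as two of the three Nijenhuis tensors vanish). -/
theorem stmt_16 {L : Type*} [LieRing L] [LieAlgebra ℝ L]
    (A B C : L →ₗ[ℝ] L)
    (hA : ∀ x, A (A x) = -x) (hB : ∀ x, B (B x) = -x)
    (hAB : ∀ x, A (B x) = -(B (A x)))
    (hC : ∀ x, C x = A (B x))
    (NA NB NC : L → L → L)
    (hNA : ∀ x y, NA x y = ⁅x, y⁆ + A ⁅A x, y⁆ + A ⁅x, A y⁆ - ⁅A x, A y⁆)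
    (hNB : ∀ x y, NB x y = ⁅x, y⁆ + B ⁅B x, y⁆ + B ⁅x, B y⁆ - ⁅B x, B y⁆)
    (hNC : ∀ x y, NC x y = ⁅x, y⁆ + C ⁅C x, y⁆ + C ⁅x, C y⁆ - ⁅C x, C y⁆)
    (hNAzero : ∀ x y, NA x y = 0) (hNBzero : ∀ x y, NB x y = 0) :
    ∀ x y, NC x y = 0 := by
  intro x y
  have hBA : ∀ z, B (A z) = -(A (B z)) := fun z => by rw [hAB z, neg_neg]
  have key : (⁅x, y⁆ + C ⁅C x, y⁆ + C ⁅x, C y⁆ - ⁅C x, C y⁆)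
      + (⁅x, y⁆ + C ⁅C x, y⁆ + C ⁅x, C y⁆ - ⁅C x, C y⁆)
      = NA x y + NA (B x) (B y) + NB x y + NB (A x) (A y)
        - A (NB x (A y)) - A (NB (A x) y)
        - B (NA x (B y)) - B (NA (B x) y) := by
    simp only [hNA, hNB, hC, map_add, map_sub, map_neg, hA, hB, hBA,
      lie_neg, neg_lie, neg_neg]
    abel
  have z : (⁅x, y⁆ + C ⁅C x, y⁆ + C ⁅x, C y⁆ - ⁅C x, C y⁆)
      + (⁅x, y⁆ + C ⁅C x, y⁆ + C ⁅x, C y⁆ - ⁅C x, C y⁆) = 0 := by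
    rw [key]
    simp [hNAzero, hNBzero]
  rw [hNC]
  have h2 : (2 : ℝ) • (⁅x, y⁆ + C ⁅C x, y⁆ + C ⁅x, C y⁆ - ⁅C x, C y⁆) = 0 := by
    rw [two_smul]; exact z
  have := smul_eq_zero.mp h2
  rcases this with h | h
  · norm_num at h
  · exact h
end
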